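/- Fix k ∈ ℝ^d and constants ρ, ν, α > 0, and for a real p×d matrix Λ of full rank d define a^{(k)}(Λ) = 1 + 4π²α² det(ΛᵀΛ)^{1/d} kᵀ(ΛᵀΛ)^{−1}k and the Whittle–Matérn-like spectral density φ_Λ(k) = ρ (Γ(ν+d/2)/Γ(ν)) (2√π α)^d · a^{(k)}(Λ)^{−(ν+d/2)}. Then the map Λ ↦ φ_Λ(k) is Fréchet differentiable at every full-rank Λ with gradient −4π²α²(ν + d/2) · [φ_Λ(k)/a^{(k)}(Λ)] · g^{(k)}(Λ), where g^{(k)}(Λ) = 2 det(ΛᵀΛ)^{1/d} Λ (ΛᵀΛ)^{−1} [ (1/d)(kᵀ(ΛᵀΛ)^{−1}k) I_d − k kᵀ (ΛᵀΛ)^{−1} ]. -/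

import Mathlib

open Matrix Real

attribute [local instance] Matrix.normedAddCommGroup Matrix.normedSpace

/-- The continuous linear map `H ↦ tr(Gᵀ H)`, representing the gradient `G`. -/
noncomputable def gradCLM {p d : ℕ} (G : Matrix (Fin p) (Fin d) ℝ) :
    Matrix (Fin p) (Fin d) ℝ →L[ℝ] ℝ :=
  LinearMap.toContinuousLinearMap
    { toFun := fun H => (Gᵀ * H).trace
      map_add' := fun H₁ H₂ => by simp [Matrix.mul_add]
      map_smul' := fun c H => by simp [Matrix.mul_smul] }

/-- The gradient matrix `g^{(k)}(Λ)`. -/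
noncomputable def gMat {p d : ℕ} (k : Fin d → ℝ) (Λ : Matrix (Fin p) (Fin d) ℝ) :
    Matrix (Fin p) (Fin d) ℝ :=
  (2 * (Λᵀ * Λ).det ^ ((1 : ℝ) / d)) •
    (Λ * (Λᵀ * Λ)⁻¹ *
      (((k ⬝ᵥ ((Λᵀ * Λ)⁻¹ *ᵥ k)) / d) • (1 : Matrix (Fin d) (Fin d) ℝ) -
        Matrix.vecMulVec k k * (Λᵀ * Λ)⁻¹))

/-- `a^{(k)}(Λ) = 1 + 4π²α² det(ΛᵀΛ)^{1/d} kᵀ(ΛᵀΛ)⁻¹k`. -/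
noncomputable def aWM {p d : ℕ} (α : ℝ) (k : Fin d → ℝ)
    (Λ : Matrix (Fin p) (Fin d) ℝ) : ℝ :=
  1 + 4 * π ^ 2 * α ^ 2 * (Λᵀ * Λ).det ^ ((1 : ℝ) / d) * (k ⬝ᵥ ((Λᵀ * Λ)⁻¹ *ᵥ k))

/-- The Whittle–Matérn-like spectral density `φ_Λ(k)`. -/
noncomputable def phiWM {p d : ℕ} (ρ ν α : ℝ) (k : Fin d → ℝ)
    (Λ : Matrix (Fin p) (Fin d) ℝ) : ℝ :=
  ρ * (Real.Gamma (ν + d / 2) / Real.Gamma ν) * (2 * Real.sqrt π * α) ^ d *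
    aWM α k Λ ^ (-(ν + (d : ℝ) / 2))

/-! ### Auxiliary lemmas -/

lemma gradCLM_apply {p d : ℕ} (G H : Matrix (Fin p) (Fin d) ℝ) :
    gradCLM G H = (Gᵀ * H).trace := rfl

lemma gradCLM_smul {p d : ℕ} (c : ℝ) (G : Matrix (Fin p) (Fin d) ℝ) :
    gradCLM (c • G) = c • gradCLM G := by
  ext H
  show ((c • G)ᵀ * H).trace = c • (Gᵀ * H).trace
  rw [Matrix.transpose_smul, Matrix.smul_mul, Matrix.trace_smul]

lemma gradCLM_add {p d : ℕ} (G₁ G₂ : Matrix (Fin p) (Fin d) ℝ) :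
    gradCLM (G₁ + G₂) = gradCLM G₁ + gradCLM G₂ := by
  ext H
  show ((G₁ + G₂)ᵀ * H).trace = (G₁ᵀ * H).trace + (G₂ᵀ * H).trace
  rw [Matrix.transpose_add, Matrix.add_mul, Matrix.trace_add]

lemma matrix_norm_mul_le {l m n : ℕ} (A : Matrix (Fin l) (Fin m) ℝ) (B : Matrix (Fin m) (Fin n) ℝ) :
    ‖A * B‖ ≤ m * ‖A‖ * ‖B‖ := by
  rw [Matrix.norm_le_iff (by positivity)]
  intro i j
  calc ‖(A * B) i j‖ = ‖∑ x, A i x * B x j‖ := by rw [Matrix.mul_apply]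
    _ ≤ ∑ x, ‖A i x * B x j‖ := norm_sum_le _ _
    _ ≤ ∑ _x : Fin m, ‖A‖ * ‖B‖ := by
        refine Finset.sum_le_sum fun x _ => ?_
        rw [norm_mul]
        exact mul_le_mul (A.norm_entry_le_entrywise_sup_norm)
          (B.norm_entry_le_entrywise_sup_norm) (norm_nonneg _) (norm_nonneg _)
    _ = m * ‖A‖ * ‖B‖ := by simp [mul_assoc]

/-- derivative of `L ↦ Lᵀ * L` as a CLM -/
noncomputable def gramCLM {p d : ℕ} (Λ : Matrix (Fin p) (Fin d) ℝ) :
    Matrix (Fin p) (Fin d) ℝ →L[ℝ] Matrix (Fin d) (Fin d) ℝ :=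
  LinearMap.toContinuousLinearMap
    { toFun := fun H => Hᵀ * Λ + Λᵀ * H
      map_add' := fun H₁ H₂ => by
        simp only [Matrix.transpose_add, Matrix.add_mul, Matrix.mul_add]; abel
      map_smul' := fun c H => by
        simp only [Matrix.transpose_smul, Matrix.smul_mul, Matrix.mul_smul, smul_add,
          RingHom.id_apply] }

lemma hasFDerivAt_gram {p d : ℕ} (Λ : Matrix (Fin p) (Fin d) ℝ) :
    HasFDerivAt (fun L : Matrix (Fin p) (Fin d) ℝ => Lᵀ * L) (gramCLM Λ) Λ := by
  apply hasFDerivAt_iff_isLittleO_nhds_zero.mpr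
  have h1 : (fun H : Matrix (Fin p) (Fin d) ℝ =>
      (Λ + H)ᵀ * (Λ + H) - Λᵀ * Λ - gramCLM Λ H) = fun H => Hᵀ * H := by
    funext H
    show (Λ + H)ᵀ * (Λ + H) - Λᵀ * Λ - (Hᵀ * Λ + Λᵀ * H) = Hᵀ * H
    simp only [Matrix.transpose_add, Matrix.add_mul, Matrix.mul_add]
    abel
  erw [h1]
  rw [Asymptotics.isLittleO_iff]
  intro c hc
  have hball : ∀ᶠ H : Matrix (Fin p) (Fin d) ℝ in nhds 0, ‖H‖ < c / (p + 1) := by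
    have := Metric.ball_mem_nhds (0 : Matrix (Fin p) (Fin d) ℝ) (by positivity : (0:ℝ) < c / (p+1))
    exact Filter.eventually_of_mem this (fun H hH => by simpa [mem_ball_zero_iff] using hH)
  filter_upwards [hball] with H hH
  calc ‖Hᵀ * H‖ ≤ p * ‖Hᵀ‖ * ‖H‖ := matrix_norm_mul_le _ _
    _ = p * ‖H‖ * ‖H‖ := by rw [Matrix.norm_transpose]
    _ ≤ c * ‖H‖ := by
        have h0 : (0:ℝ) ≤ ‖H‖ := norm_nonneg _
        have hp : (p : ℝ) * ‖H‖ ≤ c := by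
          have : (p:ℝ) * ‖H‖ ≤ (p+1) * (c/(p+1)) := by
            apply mul_le_mul (by linarith) hH.le h0 (by positivity)
          rwa [mul_div_cancel₀ c (by positivity)] at this
        nlinarith

/-- derivative of matrix inverse as a CLM -/
noncomputable def invCLM {d : ℕ} (M : Matrix (Fin d) (Fin d) ℝ) :
    Matrix (Fin d) (Fin d) ℝ →L[ℝ] Matrix (Fin d) (Fin d) ℝ :=
  LinearMap.toContinuousLinearMap
    { toFun := fun H => -(M⁻¹ * H * M⁻¹)
      map_add' := fun H₁ H₂ => by
        simp only [Matrix.mul_add, Matrix.add_mul, neg_add]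
      map_smul' := fun c H => by
        simp only [Matrix.mul_smul, Matrix.smul_mul, smul_neg, RingHom.id_apply] }

lemma hasFDerivAt_matrix_inv {d : ℕ} (M : Matrix (Fin d) (Fin d) ℝ) (hM : IsUnit M.det) :
    HasFDerivAt (fun N : Matrix (Fin d) (Fin d) ℝ => N⁻¹) (invCLM M) M := by
  have hdet0 : M.det ≠ 0 := by simpa [isUnit_iff_ne_zero] using hM
  have hcont : ContinuousAt Inv.inv M := by
    apply continuousAt_matrix_inv
    rw [(Ring.inverse_eq_inv' : (Ring.inverse : ℝ → ℝ) = Inv.inv)]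
    exact continuousAt_inv₀ hdet0
  have hdetN : ∀ᶠ N : Matrix (Fin d) (Fin d) ℝ in nhds M, IsUnit N.det := by
    have ht : Filter.Tendsto (fun N : Matrix (Fin d) (Fin d) ℝ => N.det) (nhds M) (nhds M.det) :=
      (continuous_id.matrix_det).continuousAt
    filter_upwards [ht.eventually_ne hdet0] with N hN
    exact isUnit_iff_ne_zero.mpr hN
  have hh : Filter.Tendsto (fun N : Matrix (Fin d) (Fin d) ℝ => ‖M⁻¹ * (M - N) * N⁻¹‖)
      (nhds M) (nhds 0) := by
    have h1 : Filter.Tendsto (fun N : Matrix (Fin d) (Fin d) ℝ => M⁻¹ * (M - N) * N⁻¹)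
        (nhds M) (nhds (M⁻¹ * (M - M) * M⁻¹)) := by
      apply Filter.Tendsto.mul
      apply Filter.Tendsto.mul tendsto_const_nhds
      · exact (tendsto_const_nhds.sub Filter.tendsto_id)
      · exact hcont
    simp only [sub_self, Matrix.mul_zero, Matrix.zero_mul] at h1
    simpa using h1.norm
  apply hasFDerivAt_iff_isLittleO_nhds_zero.mpr
  rw [Asymptotics.isLittleO_iff]
  intro c hc
  have hsmall : ∀ᶠ N : Matrix (Fin d) (Fin d) ℝ in nhds M,
      ‖M⁻¹ * (M - N) * N⁻¹‖ < c / (d * d * ‖M⁻¹‖ + 1) := by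
    exact hh.eventually_lt_const (by positivity)
  have hT : Filter.Tendsto (fun H : Matrix (Fin d) (Fin d) ℝ => M + H) (nhds 0) (nhds M) := by
    simpa using (tendsto_const_nhds.add Filter.tendsto_id :
      Filter.Tendsto (fun H : Matrix (Fin d) (Fin d) ℝ => M + H) (nhds 0) (nhds (M + 0)))
  filter_upwards [hT.eventually hdetN, hT.eventually hsmall] with H hN hs
  set N : Matrix (Fin d) (Fin d) ℝ := M + H with hNdef
  have hHN : H = N - M := by rw [hNdef]; abel
  rw [hHN]
  have key : N⁻¹ - M⁻¹ - invCLM M (N - M) = (M⁻¹ * (M - N)) * (M⁻¹ * (M - N) * N⁻¹) := by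
    have h2 : N⁻¹ - M⁻¹ = M⁻¹ * (M - N) * N⁻¹ := by
      rw [Matrix.mul_sub, Matrix.sub_mul, Matrix.nonsing_inv_mul M hM, Matrix.mul_assoc,
        Matrix.mul_nonsing_inv N hN, Matrix.one_mul, Matrix.mul_one]
    have h3 : invCLM M (N - M) = -(M⁻¹ * (N - M) * M⁻¹) := rfl
    rw [h3, h2]
    have h4 : M⁻¹ * (M - N) * N⁻¹ - M⁻¹ * (M - N) * M⁻¹
        = (M⁻¹ * (M - N)) * (M⁻¹ * (M - N) * N⁻¹) := by
      rw [← Matrix.mul_sub, h2]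
    rw [← h4]
    have : -(M⁻¹ * (N - M) * M⁻¹) = M⁻¹ * (M - N) * M⁻¹ := by
      rw [show (M - N) = -(N - M) from (neg_sub N M).symm, Matrix.mul_neg, Matrix.neg_mul]
    rw [this]
  erw [key]
  calc ‖(M⁻¹ * (M - N)) * (M⁻¹ * (M - N) * N⁻¹)‖
      ≤ d * ‖M⁻¹ * (M - N)‖ * ‖M⁻¹ * (M - N) * N⁻¹‖ := matrix_norm_mul_le _ _
    _ ≤ d * (d * ‖M⁻¹‖ * ‖M - N‖) * ‖M⁻¹ * (M - N) * N⁻¹‖ := by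
        apply mul_le_mul_of_nonneg_right _ (norm_nonneg _)
        exact mul_le_mul_of_nonneg_left (matrix_norm_mul_le _ _) (by positivity)
    _ ≤ c * ‖N - M‖ := by
        rw [norm_sub_rev M N]
        have hn : (0:ℝ) ≤ ‖N - M‖ := norm_nonneg _
        have hq : (d:ℝ) * (d * ‖M⁻¹‖) * ‖M⁻¹ * (M - N) * N⁻¹‖ ≤ c := by
          have hb : (d:ℝ) * d * ‖M⁻¹‖ ≤ d * d * ‖M⁻¹‖ + 1 := by linarith
          calc (d:ℝ) * (d * ‖M⁻¹‖) * ‖M⁻¹ * (M - N) * N⁻¹‖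
              ≤ (d * d * ‖M⁻¹‖ + 1) * (c / (d * d * ‖M⁻¹‖ + 1)) := by
                apply mul_le_mul (by rw [← mul_assoc]; linarith) hs.le (norm_nonneg _)
                  (by positivity)
            _ = c := by field_simp
        nlinarith [norm_nonneg (M⁻¹ * (M - N) * N⁻¹), Nat.cast_nonneg (α := ℝ) d,
          norm_nonneg M⁻¹]

/-- `det` as a continuous multilinear map in the rows. -/
noncomputable def detCMM (n : ℕ) :
    ContinuousMultilinearMap ℝ (fun _ : Fin n => (Fin n → ℝ)) ℝ :=
  MultilinearMap.mkContinuous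
    (Matrix.detRowAlternating (n := Fin n) (R := ℝ)).toMultilinearMap (Nat.factorial n)
    (by
      intro m
      show ‖(Matrix.of m).det‖ ≤ (Nat.factorial n) * ∏ i, ‖m i‖
      rw [Matrix.det_apply]
      calc ‖∑ σ : Equiv.Perm (Fin n), Equiv.Perm.sign σ • ∏ i, Matrix.of m (σ i) i‖
          ≤ ∑ σ : Equiv.Perm (Fin n), ‖Equiv.Perm.sign σ • ∏ i, Matrix.of m (σ i) i‖ :=
            norm_sum_le _ _
        _ ≤ ∑ _σ : Equiv.Perm (Fin n), ∏ i, ‖m i‖ := by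
            refine Finset.sum_le_sum fun σ _ => ?_
            have h1 : ‖Equiv.Perm.sign σ • ∏ i, Matrix.of m (σ i) i‖
                = ‖∏ i, m (σ i) i‖ := by
              rcases Int.units_eq_one_or (Equiv.Perm.sign σ) with h | h <;> simp [h]
            rw [h1]
            calc ‖∏ i, m (σ i) i‖ = ∏ i, ‖m (σ i) i‖ := by rw [norm_prod]
              _ ≤ ∏ i, ‖m (σ i)‖ := by
                  refine Finset.prod_le_prod (fun i _ => norm_nonneg _) fun i _ => ?_
                  exact norm_le_pi_norm (m (σ i)) i
              _ = ∏ i, ‖m i‖ := Equiv.prod_comp σ fun i => ‖m i‖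
        _ = (Nat.factorial n) * ∏ i, ‖m i‖ := by
            rw [Finset.sum_const, Finset.card_univ, Fintype.card_perm, Fintype.card_fin,
              nsmul_eq_mul])

noncomputable def detDerivCLM {n : ℕ} (M : Matrix (Fin n) (Fin n) ℝ) :
    Matrix (Fin n) (Fin n) ℝ →L[ℝ] ℝ :=
  LinearMap.toContinuousLinearMap
    { toFun := fun H => (M.adjugate * H).trace
      map_add' := fun H₁ H₂ => by simp [Matrix.mul_add]
      map_smul' := fun c H => by simp [Matrix.mul_smul] }

lemma sum_det_updateRow {n : ℕ} (M H : Matrix (Fin n) (Fin n) ℝ) :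
    ∑ i, (M.updateRow i (H i)).det = (M.adjugate * H).trace := by
  have h1 : ∀ i, (M.updateRow i (H i)).det = ∑ j, M.adjugate j i * H i j := by
    intro i
    have h2 : (M.updateRow i (H i)).det = (Mᵀ.updateCol i (H i)).det := by
      rw [Matrix.updateCol_transpose, Matrix.det_transpose]
    rw [h2, ← Matrix.cramer_apply, Matrix.cramer_eq_adjugate_mulVec,
      ← Matrix.adjugate_transpose]
    simp [Matrix.mulVec, dotProduct, Matrix.transpose_apply]
  simp only [h1]
  rw [Matrix.trace]
  simp only [Matrix.diag_apply, Matrix.mul_apply]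
  exact Finset.sum_comm

lemma hasFDerivAt_matrix_det {n : ℕ} (M : Matrix (Fin n) (Fin n) ℝ) :
    HasFDerivAt (Matrix.det : Matrix (Fin n) (Fin n) ℝ → ℝ) (detDerivCLM M) M := by
  have h := (detCMM n).hasFDerivAt (x := M)
  have hfun : ⇑(detCMM n) = (Matrix.det : Matrix (Fin n) (Fin n) ℝ → ℝ) := by
    funext N
    rfl
  have hderiv : (detCMM n).linearDeriv M = detDerivCLM M := by
    apply ContinuousLinearMap.ext
    intro H
    refine (ContinuousMultilinearMap.linearDeriv_apply ..).trans ?_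
    exact sum_det_updateRow M (Matrix.of H)
  rw [hfun, hderiv] at h
  exact h

lemma trace_gram {p d : ℕ} (Λ H : Matrix (Fin p) (Fin d) ℝ) (A : Matrix (Fin d) (Fin d) ℝ) :
    (A * (Hᵀ * Λ + Λᵀ * H)).trace = ((Λ * (A + Aᵀ))ᵀ * H).trace := by
  have h1 : (A * (Hᵀ * Λ)).trace = ((Λ * A)ᵀ * H).trace := by
    rw [← Matrix.mul_assoc, Matrix.trace_mul_cycle, ← Matrix.trace_transpose,
      Matrix.transpose_mul, Matrix.transpose_transpose, Matrix.trace_mul_comm]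
  have h2 : (A * (Λᵀ * H)).trace = ((Λ * Aᵀ)ᵀ * H).trace := by
    rw [Matrix.transpose_mul, Matrix.transpose_transpose, ← Matrix.mul_assoc]
  rw [Matrix.mul_add, Matrix.trace_add, h1, h2, Matrix.mul_add, Matrix.transpose_add,
    Matrix.add_mul, Matrix.trace_add]

lemma dot_trace {d : ℕ} (k : Fin d → ℝ) (B : Matrix (Fin d) (Fin d) ℝ) :
    k ⬝ᵥ (B *ᵥ k) = (B * Matrix.vecMulVec k k).trace := by
  rw [Matrix.trace]
  simp only [Matrix.diag_apply, Matrix.mul_apply, Matrix.vecMulVec_apply, dotProduct,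
    Matrix.mulVec]
  refine Finset.sum_congr rfl fun j _ => ?_
  rw [Finset.mul_sum]
  refine Finset.sum_congr rfl fun i _ => ?_
  ring

/-- the linear functional `W ↦ kᵀ W k` -/
noncomputable def dotCLM {d : ℕ} (k : Fin d → ℝ) :
    Matrix (Fin d) (Fin d) ℝ →L[ℝ] ℝ :=
  LinearMap.toContinuousLinearMap
    { toFun := fun W => k ⬝ᵥ (W *ᵥ k)
      map_add' := fun W₁ W₂ => by simp [Matrix.add_mulVec, dotProduct_add]
      map_smul' := fun c W => by simp [Matrix.smul_mulVec, dotProduct_smul] }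

theorem stmt17 (p d : ℕ) (hd : 1 ≤ d) (hdp : d ≤ p)
    (k : Fin d → ℝ) (ρ ν α : ℝ) (hρ : 0 < ρ) (hν : 0 < ν) (hα : 0 < α)
    (Λ : Matrix (Fin p) (Fin d) ℝ) (hΛ : Λ.rank = d) :
    HasFDerivAt (fun L : Matrix (Fin p) (Fin d) ℝ => phiWM ρ ν α k L)
      (gradCLM ((-(4 * π ^ 2 * α ^ 2 * (ν + (d : ℝ) / 2)) *
        (phiWM ρ ν α k Λ / aWM α k Λ)) • gMat k Λ)) Λ := by
  classical
  set M : Matrix (Fin d) (Fin d) ℝ := Λᵀ * Λ with hMdef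
  -- injectivity of Λ *ᵥ ·
  have hker : ∀ x : Fin d → ℝ, x ≠ 0 → Λ *ᵥ x ≠ 0 := by
    intro x hx hcontra
    have hk : LinearMap.ker Λ.mulVecLin = ⊥ := by
      have h1 := LinearMap.finrank_range_add_finrank_ker (Λ.mulVecLin)
      have h2 : Module.finrank ℝ (LinearMap.range Λ.mulVecLin) = d := hΛ
      have h3 : Module.finrank ℝ (Fin d → ℝ) = d := by simp
      rw [h2, h3] at h1
      have h4 : Module.finrank ℝ (LinearMap.ker Λ.mulVecLin) = 0 := by omega
      exact Submodule.finrank_eq_zero.mp h4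
    have : x ∈ LinearMap.ker Λ.mulVecLin := by
      rw [LinearMap.mem_ker, Matrix.mulVecLin_apply]
      exact hcontra
    rw [hk, Submodule.mem_bot] at this
    exact hx this
  -- positive definiteness of the Gram matrix
  have hMT : Mᵀ = M := by rw [hMdef, Matrix.transpose_mul, Matrix.transpose_transpose]
  have hpd : M.PosDef := by
    rw [Matrix.posDef_iff_dotProduct_mulVec]
    constructor
    · exact hMT
    · intro x hx
      have h1 : star x ⬝ᵥ (M *ᵥ x) = (Λ *ᵥ x) ⬝ᵥ (Λ *ᵥ x) := by
        rw [hMdef, ← Matrix.mulVec_mulVec, Matrix.dotProduct_mulVec, star_trivial,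
          Matrix.vecMul_transpose]
      rw [h1]
      have hv : Λ *ᵥ x ≠ 0 := hker x hx
      have h2 : (0:ℝ) ≤ (Λ *ᵥ x) ⬝ᵥ (Λ *ᵥ x) := by
        apply Finset.sum_nonneg
        intro i _
        exact mul_self_nonneg _
      rcases h2.lt_or_eq with h | h
      · exact h
      · exact absurd ((dotProduct_self_eq_zero).mp h.symm) hv
  have hD0 : 0 < M.det := hpd.det_pos
  have hMdet : IsUnit M.det := isUnit_iff_ne_zero.mpr hD0.ne'
  have hMinvT : (M⁻¹)ᵀ = M⁻¹ := by rw [Matrix.transpose_nonsing_inv, hMT]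
  have hadj : M.adjugate = M.det • M⁻¹ := by
    rw [← Matrix.one_mul M.adjugate, ← Matrix.nonsing_inv_mul M hMdet, Matrix.mul_assoc,
      Matrix.mul_adjugate, Matrix.mul_smul, Matrix.mul_one]
  have hKT : (Matrix.vecMulVec k k)ᵀ = Matrix.vecMulVec k k := by
    ext i j
    simp [Matrix.vecMulVec_apply, mul_comm]
  -- abbreviations
  set q : ℝ := k ⬝ᵥ (M⁻¹ *ᵥ k) with hqdef
  set e : ℝ := M.det ^ ((1:ℝ)/d) with hedef
  set c4 : ℝ := 4 * π ^ 2 * α ^ 2 with hc4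
  set s : ℝ := ν + (d : ℝ) / 2 with hs
  set C : ℝ := ρ * (Real.Gamma (ν + d / 2) / Real.Gamma ν) * (2 * Real.sqrt π * α) ^ d with hC
  have he0 : 0 < e := Real.rpow_pos_of_pos hD0 _
  have hq0 : 0 ≤ q := by
    have := hpd.inv.posSemidef.dotProduct_mulVec_nonneg k
    simpa [hqdef] using this
  have ha0 : 0 < aWM α k Λ := by
    rw [aWM]
    have : 0 ≤ 4 * π ^ 2 * α ^ 2 * (Λᵀ * Λ).det ^ ((1:ℝ)/d) * (k ⬝ᵥ ((Λᵀ*Λ)⁻¹ *ᵥ k)) := by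
      apply mul_nonneg
      apply mul_nonneg (by positivity) (le_of_lt _)
      · exact Real.rpow_pos_of_pos hD0 _
      · exact hq0
    linarith
  -- derivative of L ↦ det(LᵀL)
  have hDet : HasFDerivAt (fun L : Matrix (Fin p) (Fin d) ℝ => (Lᵀ * L).det)
      (gradCLM ((2 * M.det) • (Λ * M⁻¹))) Λ := by
    have h := (hasFDerivAt_matrix_det M).comp Λ (hasFDerivAt_gram Λ)
    have heq : (detDerivCLM M).comp (gramCLM Λ) = gradCLM ((2 * M.det) • (Λ * M⁻¹)) := by
      apply ContinuousLinearMap.ext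
      intro H
      show (M.adjugate * (Hᵀ * Λ + Λᵀ * H)).trace = _
      rw [trace_gram, gradCLM_apply]
      have hA : Λ * (M.adjugate + M.adjugateᵀ) = (2 * M.det) • (Λ * M⁻¹) := by
        rw [hadj, Matrix.transpose_smul, hMinvT, ← add_smul, Matrix.mul_smul, two_mul]
      rw [hA]
    replace h := h.congr_fderiv heq
    exact h
  -- derivative of L ↦ kᵀ (LᵀL)⁻¹ k
  have hQ : HasFDerivAt (fun L : Matrix (Fin p) (Fin d) ℝ => k ⬝ᵥ ((Lᵀ * L)⁻¹ *ᵥ k))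
      (gradCLM ((-2 : ℝ) • (Λ * M⁻¹ * Matrix.vecMulVec k k * M⁻¹))) Λ := by
    have h := (dotCLM k).hasFDerivAt.comp Λ
      ((hasFDerivAt_matrix_inv M hMdet).comp Λ (hasFDerivAt_gram Λ))
    have heq : (dotCLM k).comp ((invCLM M).comp (gramCLM Λ))
        = gradCLM ((-2 : ℝ) • (Λ * M⁻¹ * Matrix.vecMulVec k k * M⁻¹)) := by
      apply ContinuousLinearMap.ext
      intro H
      show k ⬝ᵥ ((-(M⁻¹ * (Hᵀ * Λ + Λᵀ * H) * M⁻¹)) *ᵥ k) = _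
      rw [dot_trace]
      rw [Matrix.neg_mul, Matrix.trace_neg]
      have hcyc : (M⁻¹ * (Hᵀ * Λ + Λᵀ * H) * M⁻¹ * Matrix.vecMulVec k k).trace
          = ((M⁻¹ * Matrix.vecMulVec k k * M⁻¹) * (Hᵀ * Λ + Λᵀ * H)).trace := by
        rw [Matrix.mul_assoc (M⁻¹ * (Hᵀ * Λ + Λᵀ * H)) M⁻¹ (Matrix.vecMulVec k k),
          Matrix.trace_mul_comm, ← Matrix.mul_assoc]
      rw [hcyc, ← Matrix.trace_neg, ← Matrix.neg_mul, trace_gram, gradCLM_apply]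
      have hA : Λ * (-(M⁻¹ * Matrix.vecMulVec k k * M⁻¹)
            + (-(M⁻¹ * Matrix.vecMulVec k k * M⁻¹))ᵀ)
          = (-2 : ℝ) • (Λ * M⁻¹ * Matrix.vecMulVec k k * M⁻¹) := by
        rw [Matrix.transpose_neg, Matrix.transpose_mul, Matrix.transpose_mul, hMinvT, hKT,
          ← Matrix.mul_assoc M⁻¹ (Matrix.vecMulVec k k) M⁻¹]
        rw [show -(M⁻¹ * Matrix.vecMulVec k k * M⁻¹) + -(M⁻¹ * Matrix.vecMulVec k k * M⁻¹)
            = (-2 : ℝ) • (M⁻¹ * Matrix.vecMulVec k k * M⁻¹) from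
          ((by rw [neg_smul, two_smul, neg_add] : ((-2:ℝ) • (M⁻¹ * Matrix.vecMulVec k k * M⁻¹)
            = -(M⁻¹ * Matrix.vecMulVec k k * M⁻¹) + -(M⁻¹ * Matrix.vecMulVec k k * M⁻¹)))).symm]
        rw [Matrix.mul_smul, ← Matrix.mul_assoc, ← Matrix.mul_assoc]
      rw [hA]
    replace h := h.congr_fderiv heq
    exact h
  -- scalar chain rule assembly
  have hr1 : HasDerivAt (fun x : ℝ => x ^ ((1:ℝ)/d)) (((1:ℝ)/d) * M.det ^ ((1:ℝ)/d - 1)) M.det :=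
    Real.hasDerivAt_rpow_const (Or.inl hD0.ne')
  have hE := hr1.comp_hasFDerivAt Λ hDet
  have hU := hE.mul hQ
  have hA' : HasFDerivAt (fun L : Matrix (Fin p) (Fin d) ℝ => aWM α k L)
      (c4 • ((M.det ^ ((1:ℝ)/d)) • gradCLM ((-2 : ℝ) • (Λ * M⁻¹ * Matrix.vecMulVec k k * M⁻¹))
        + (k ⬝ᵥ (M⁻¹ *ᵥ k)) • ((((1:ℝ)/d) * M.det ^ ((1:ℝ)/d - 1)) •
            gradCLM ((2 * M.det) • (Λ * M⁻¹))))) Λ := by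
    have h1 := (hU.const_mul c4).const_add 1
    exact h1.congr_of_eventuallyEq (Filter.Eventually.of_forall fun L => by
      simp only [aWM, hc4, Function.comp_apply, Pi.mul_apply]
      ring)
  have hr2 : HasDerivAt (fun x : ℝ => x ^ (-s)) ((-s) * (aWM α k Λ) ^ (-s - 1)) (aWM α k Λ) :=
    Real.hasDerivAt_rpow_const (Or.inl ha0.ne')
  have hPhi : HasFDerivAt (fun L : Matrix (Fin p) (Fin d) ℝ => phiWM ρ ν α k L)
      (C • (((-s) * (aWM α k Λ) ^ (-s - 1)) •
        (c4 • ((M.det ^ ((1:ℝ)/d)) • gradCLM ((-2 : ℝ) • (Λ * M⁻¹ * Matrix.vecMulVec k k * M⁻¹))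
          + (k ⬝ᵥ (M⁻¹ *ᵥ k)) • ((((1:ℝ)/d) * M.det ^ ((1:ℝ)/d - 1)) •
              gradCLM ((2 * M.det) • (Λ * M⁻¹))))))) Λ := by
    have h2 := (hr2.comp_hasFDerivAt Λ hA').const_mul C
    exact h2.congr_of_eventuallyEq (Filter.Eventually.of_forall fun L => by
      show phiWM ρ ν α k L = C * _
      rw [phiWM, hC, hs]
      rfl)
  -- identify the derivative
  have hderiv_eq : C • (((-s) * (aWM α k Λ) ^ (-s - 1)) •
        (c4 • ((M.det ^ ((1:ℝ)/d)) • gradCLM ((-2 : ℝ) • (Λ * M⁻¹ * Matrix.vecMulVec k k * M⁻¹))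
          + (k ⬝ᵥ (M⁻¹ *ᵥ k)) • ((((1:ℝ)/d) * M.det ^ ((1:ℝ)/d - 1)) •
              gradCLM ((2 * M.det) • (Λ * M⁻¹))))))
      = gradCLM ((-(c4 * s) * (phiWM ρ ν α k Λ / aWM α k Λ)) • gMat k Λ) := by
    simp only [← gradCLM_smul, ← gradCLM_add]
    congr 1
    -- pure matrix/scalar identity
    have hphia : phiWM ρ ν α k Λ / aWM α k Λ = C * (aWM α k Λ) ^ (-s - 1) := by
      have h1 : phiWM ρ ν α k Λ = C * (aWM α k Λ) ^ (-s) := by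
        rw [phiWM, hC, hs]
      rw [h1, mul_div_assoc, ← Real.rpow_sub_one ha0.ne']
    have hpow' : M.det ^ ((1:ℝ)/d - 1) = M.det ^ ((1:ℝ)/d) / M.det :=
      Real.rpow_sub_one hD0.ne' _
    have hgm : gMat k Λ = (2 * M.det ^ ((1:ℝ)/d)) •
        (((k ⬝ᵥ (M⁻¹ *ᵥ k)) / d) • (Λ * M⁻¹) - Λ * M⁻¹ * Matrix.vecMulVec k k * M⁻¹) := by
      rw [gMat, ← hMdef, Matrix.mul_sub, Matrix.mul_smul, Matrix.mul_one, ← Matrix.mul_assoc]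
    rw [hphia, hpow', hgm]
    have hd0 : (d : ℝ) ≠ 0 := by
      have : 0 < d := hd
      positivity
    match_scalars
    · field_simp
    · field_simp
  rw [hderiv_eq] at hPhi
  exact hPhi
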